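/- If z is a fusible number whose maximum representation height h_max(z) strictly exceeds its exponent e(z), then z is a limit point of the fusible numbers from below (z is not the successor of any fusible number). -/

import Mathlib

/-- The set of fusible numbers. -/
inductive Fusible : ℝ → Prop
  | zero : Fusible 0
  | fuse (x y : ℝ) : Fusible x → Fusible y → |y - x| < 1 → Fusible ((x + y + 1) / 2)

/-- Full binary trees, used as representations of fusible numbers. -/
inductive RepTree where
  | leaf : RepTree
  | node (l r : RepTree) : RepTree

/-- The value of a representation: leaves are `0`, internal nodes fuse their children. -/
noncomputable def RepTree.val : RepTree → ℝ
  | .leaf => 0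
  | .node l r => (l.val + r.val + 1) / 2

/-- Validity of a representation: at every internal node, the children differ by less than 1. -/
def RepTree.Valid : RepTree → Prop
  | .leaf => True
  | .node l r => l.Valid ∧ r.Valid ∧ |r.val - l.val| < 1

/-- The height of a representation: length of the longest root-to-leaf path. -/
def RepTree.height : RepTree → ℕ
  | .leaf => 0
  | .node l r => max l.height r.height + 1

/-- `IsExp r n` means that the dyadic rational `r` has exponent `n`, i.e. `n` is the least
natural number such that `r = p / 2 ^ n` for an integer `p` (so that `p` is odd when `n ≥ 1`). -/
def IsExp (r : ℝ) (n : ℕ) : Prop :=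
  (∃ p : ℤ, r = (p : ℝ) / 2 ^ n) ∧ ∀ m : ℕ, m < n → ¬ ∃ p : ℤ, r = (p : ℝ) / 2 ^ m

/-- `HMaxIs z n` means that the maximum height over all representations of `z` is `n`. -/
def HMaxIs (z : ℝ) (n : ℕ) : Prop :=
  (∃ T : RepTree, T.Valid ∧ T.val = z ∧ T.height = n) ∧
  ∀ T : RepTree, T.Valid → T.val = z → T.height ≤ n

/-- `z` is a limit fusible number: it is the supremum of the smaller fusible numbers. -/
def IsLimitFusible (z : ℝ) : Prop :=
  IsLUB {w : ℝ | Fusible w ∧ w < z} z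

/- ### auxiliary lemmas -/

lemma myFusibleVal : ∀ T : RepTree, T.Valid → Fusible T.val := by
  intro T
  induction T with
  | leaf => intro _; exact Fusible.zero
  | node L R ihL ihR =>
    intro h
    obtain ⟨h1, h2, h3⟩ := h
    exact Fusible.fuse _ _ (ihL h1) (ihR h2) h3

lemma myExistsRep {z : ℝ} (hz : Fusible z) : ∃ T : RepTree, T.Valid ∧ T.val = z := by
  induction hz with
  | zero => exact ⟨.leaf, trivial, rfl⟩
  | fuse x y hx hy hxy ihx ihy =>
    obtain ⟨Tx, hTx, hTxv⟩ := ihx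
    obtain ⟨Ty, hTy, hTyv⟩ := ihy
    exact ⟨.node Tx Ty, ⟨hTx, hTy, by rw [hTxv, hTyv]; exact hxy⟩, by
      simp only [RepTree.val, hTxv, hTyv]⟩

lemma myValDyadicAux : ∀ (T : RepTree) (k : ℕ), T.height ≤ k → ∃ p : ℤ, T.val = (p : ℝ) / 2 ^ k := by
  intro T
  induction T with
  | leaf => exact fun k _ => ⟨0, by simp [RepTree.val]⟩
  | node L R ihL ihR =>
    intro k hk
    have hk1 : max L.height R.height + 1 ≤ k := hk
    obtain ⟨j, rfl⟩ : ∃ j, k = j + 1 := ⟨k - 1, by omega⟩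
    obtain ⟨p, hp⟩ := ihL j (by omega)
    obtain ⟨q, hq⟩ := ihR j (by omega)
    refine ⟨p + q + 2 ^ j, ?_⟩
    have h0 : (2:ℝ) ^ j ≠ 0 := by positivity
    show (L.val + R.val + 1) / 2 = _ / 2 ^ (j + 1)
    rw [hp, hq]
    push_cast
    rw [← add_div, div_add_one h0, div_div, pow_succ]

lemma myValDyadic (T : RepTree) : ∃ p : ℤ, T.val = (p : ℝ) / 2 ^ T.height :=
  myValDyadicAux T T.height le_rfl

lemma myExistsExp {x : ℝ} (h : ∃ k : ℕ, ∃ p : ℤ, x = (p:ℝ) / 2 ^ k) : ∃ m, IsExp x m := by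
  classical
  exact ⟨Nat.find h, Nat.find_spec h, fun m hm => Nat.find_min h hm⟩

lemma myExpUnique {x : ℝ} {m m' : ℕ} (h : IsExp x m) (h' : IsExp x m') : m = m' := by
  by_contra hne
  rcases Nat.lt_or_ge m m' with hlt | hge
  · exact h'.2 m hlt h.1
  · exact h.2 m' (by omega) h'.1

lemma myExpLeHeight {T : RepTree} {m : ℕ} (h : IsExp T.val m) : m ≤ T.height := by
  by_contra hlt
  exact h.2 T.height (by omega) (myValDyadic T)

lemma myScale {x : ℝ} {k b : ℕ} (hkb : k ≤ b) (p : ℤ) (h : x = (p:ℝ) / 2 ^ k) :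
    ∃ q : ℤ, x = (q:ℝ) / 2 ^ b := by
  refine ⟨p * 2 ^ (b - k), ?_⟩
  have e1 : (2:ℝ) ^ b = 2 ^ (b - k) * 2 ^ k := by rw [← pow_add]; congr 1; omega
  have : (2:ℝ) ^ k ≠ 0 := by positivity
  rw [h]
  push_cast
  rw [e1]
  field_simp

lemma myOddOfExp {x : ℝ} {b : ℕ} (h : IsExp x b) (hb : 1 ≤ b) :
    ∃ p : ℤ, Odd p ∧ x = (p:ℝ) / 2 ^ b := by
  obtain ⟨p, hp⟩ := h.1
  rcases Int.even_or_odd p with ⟨t, ht⟩ | hodd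
  · exfalso
    refine h.2 (b - 1) (by omega) ⟨t, ?_⟩
    have e1 : (2:ℝ) ^ b = 2 ^ (b - 1) * 2 := by
      rw [← pow_succ]; congr 1; omega
    rw [hp, ht]
    push_cast
    rw [e1]
    have : (2:ℝ) ^ (b-1) ≠ 0 := by positivity
    field_simp
    ring
  · exact ⟨p, hodd, hp⟩

lemma myExpOfOdd {x : ℝ} {b : ℕ} {p : ℤ} (hp : Odd p) (hb : 1 ≤ b)
    (hx : x = (p:ℝ) / 2 ^ b) : IsExp x b := by
  refine ⟨⟨p, hx⟩, fun m hm => ?_⟩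
  rintro ⟨q, hq⟩
  have e1 : (2:ℝ) ^ b = 2 ^ (b - m) * 2 ^ m := by rw [← pow_add]; congr 1; omega
  have h2m : (2:ℝ) ^ m ≠ 0 := by positivity
  have h2bm : (2:ℝ) ^ (b - m) ≠ 0 := by positivity
  have : (p : ℝ) = (q : ℝ) * 2 ^ (b - m) := by
    rw [hx] at hq
    rw [e1] at hq
    field_simp at hq
    linarith
  have hpz : p = q * 2 ^ (b - m) := by exact_mod_cast this
  have : Even p := by
    refine ⟨q * 2 ^ (b - m - 1), ?_⟩
    rw [hpz]
    have : (2:ℤ) ^ (b - m) = 2 ^ (b - m - 1) * 2 := by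
      rw [← pow_succ]; congr 1; omega
    rw [this]; ring
  exact (Int.not_odd_iff_even.mpr this) hp

lemma myExpFuseNe {u v : ℝ} {a c : ℕ} (hu : IsExp u a) (hv : IsExp v c) (hac : a < c) :
    IsExp ((u + v + 1) / 2) (c + 1) := by
  obtain ⟨d, rfl⟩ : ∃ d, c = a + d + 1 := ⟨c - a - 1, by omega⟩
  obtain ⟨p, hp⟩ := hu.1
  obtain ⟨q, hqo, hq⟩ := myOddOfExp hv (by omega)
  obtain ⟨t, ht⟩ := hqo
  refine myExpOfOdd (p := p * 2 ^ (d + 1) + q + 2 ^ (a + d + 1)) ?_ (by omega) ?_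
  · exact ⟨p * 2 ^ d + t + 2 ^ (a + d), by rw [ht]; ring⟩
  · have e1 : (2:ℝ) ^ (a + d + 1) = 2 ^ (d + 1) * 2 ^ a := by rw [← pow_add]; congr 1; omega
    have h2a : (2:ℝ) ^ a ≠ 0 := by positivity
    have h2c : (2:ℝ) ^ (a + d + 1) ≠ 0 := by positivity
    rw [hp, hq]
    push_cast
    field_simp
    ring
/- ### the approximation property P -/

def MyP (x : ℝ) : Prop := ∃ J : ℕ, ∀ j : ℕ, J ≤ j → Fusible (x - 1 / 2 ^ j)

lemma myFusOneSub : ∀ j : ℕ, Fusible (1 - 1 / 2 ^ j) := by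
  intro j
  induction j with
  | zero => simpa using Fusible.zero
  | succ j ih =>
    have h1 : (0:ℝ) < 1 / 2 ^ j := by positivity
    have h2 : (1:ℝ) / 2 ^ j ≤ 1 := by
      rw [div_le_one (by positivity)]
      exact one_le_pow₀ one_le_two
    have habs : |(0:ℝ) - (1 - 1 / 2 ^ j)| < 1 := by
      rw [abs_lt]; constructor <;> linarith
    have := Fusible.fuse _ _ ih Fusible.zero habs
    have heq : ((1 - 1 / 2 ^ j : ℝ) + 0 + 1) / 2 = 1 - 1 / 2 ^ (j + 1) := by
      rw [pow_succ]; ring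
    rwa [heq] at this

lemma myPOne : MyP 1 := ⟨0, fun j _ => myFusOneSub j⟩

lemma myPFuse {o c : ℝ} (ho : Fusible o) (hc : MyP c)
    (hhigh : c - o ≤ 1) (hlow : o - c < 1) : MyP ((o + c + 1) / 2) := by
  obtain ⟨J, hJ⟩ := hc
  obtain ⟨N, hN⟩ := exists_pow_lt_of_lt_one (sub_pos.mpr (by linarith : o - c < 1))
    (by norm_num : (1:ℝ)/2 < 1)
  refine ⟨max (J + 1) (N + 1), fun j hj => ?_⟩
  obtain ⟨i, rfl⟩ : ∃ i, j = i + 1 := ⟨j - 1, by omega⟩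
  have hiJ : J ≤ i := by omega
  have hiN : N ≤ i := by omega
  have hpow : (1:ℝ) / 2 ^ i ≤ (1/2 : ℝ) ^ N := by
    calc (1:ℝ) / 2 ^ i = (1/2:ℝ) ^ i := by rw [div_pow, one_pow]
    _ ≤ (1/2:ℝ) ^ N := pow_le_pow_of_le_one (by norm_num) (by norm_num) hiN
  have hipos : (0:ℝ) < 1 / 2 ^ i := by positivity
  have habs : |(c - 1 / 2 ^ i) - o| < 1 := by
    rw [abs_lt]
    constructor
    · -- -1 < c - 1/2^i - o  ↔  o - c + 1/2^i < 1
      have : (1:ℝ)/2^i < 1 - (o - c) := lt_of_le_of_lt hpow hN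
      linarith
    · linarith
  have := Fusible.fuse _ _ ho (hJ i hiJ) habs
  have heq : (o + (c - 1 / 2 ^ i) + 1) / 2 = (o + c + 1) / 2 - 1 / 2 ^ (i + 1) := by
    rw [pow_succ]; ring
  rwa [heq] at this

/- ### "successor-type" fusible numbers -/

def MaxHeightLe (z : ℝ) (n : ℕ) : Prop :=
  ∀ T : RepTree, T.Valid → T.val = z → T.height ≤ n

def SuccT (b : ℕ) (x : ℝ) : Prop := Fusible x ∧ IsExp x b ∧ MaxHeightLe x b

lemma myGap {b : ℕ} {o c : ℝ} {p q : ℤ} (ho : o = (p:ℝ) / 2 ^ b) (hc : c = (q:ℝ) / 2 ^ b)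
    (h : |c - o| < 1) : |c - o| ≤ 1 - 1 / 2 ^ b := by
  have h2b : (0:ℝ) < 2 ^ b := by positivity
  have hco : c - o = ((q - p : ℤ) : ℝ) / 2 ^ b := by rw [ho, hc]; push_cast; ring
  have habs : |((q - p : ℤ) : ℝ)| < 2 ^ b := by
    rw [hco, abs_div, abs_of_pos h2b, div_lt_one h2b] at h
    exact h
  have hint : |q - p| < (2:ℤ) ^ b := by exact_mod_cast habs
  have hint2 : |q - p| ≤ (2:ℤ) ^ b - 1 := by omega
  have hr : |((q - p : ℤ):ℝ)| ≤ (2:ℝ) ^ b - 1 := by exact_mod_cast hint2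
  rw [hco, abs_div, abs_of_pos h2b, div_le_iff₀ h2b]
  calc |((q - p : ℤ):ℝ)| ≤ 2 ^ b - 1 := hr
  _ = (1 - 1/2^b) * 2^b := by field_simp
/- ### the key step lemma -/

lemma myStepCore {b : ℕ} {o c : ℝ} (ho : Fusible o)
    (h1 : c - o ≤ 1 - 1 / 2 ^ b) (h2 : o - c ≤ 1 - 1 / 2 ^ b)
    (hc1 : Fusible (c - 1 / 2 ^ b)) (hc2 : MyP (c + 1 / 2 ^ b)) :
    Fusible ((o + c + 1) / 2 - 1 / 2 ^ (b + 1)) ∧ MyP ((o + c + 1) / 2 + 1 / 2 ^ (b + 1)) := by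
  have hbpos : (0:ℝ) < 1 / 2 ^ b := by positivity
  constructor
  · by_cases hcase : o - (c - 1 / 2 ^ b) < 1
    · have habs : |(c - 1 / 2 ^ b) - o| < 1 := by
        rw [abs_lt]; constructor <;> [linarith; linarith]
      have := Fusible.fuse _ _ ho hc1 habs
      have heq : (o + (c - 1 / 2 ^ b : ℝ) + 1) / 2 = (o + c + 1) / 2 - 1 / 2 ^ (b + 1) := by
        rw [pow_succ]; ring
      rwa [heq] at this
    · push_neg at hcase
      have heq2 : o - c = 1 - 1 / 2 ^ b := by linarith
      have heq : ((o + c + 1) / 2 - 1 / 2 ^ (b + 1) : ℝ) = o := by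
        rw [pow_succ]
        have : (1:ℝ) / (2 ^ b * 2) = (1 / 2 ^ b) / 2 := by ring
        rw [this]
        linarith
      rwa [heq]
  · have hres := myPFuse ho hc2 (by linarith : (c + 1 / 2 ^ b) - o ≤ 1)
      (by linarith : o - (c + 1 / 2 ^ b) < 1)
    have heq : (o + (c + 1 / 2 ^ b : ℝ) + 1) / 2 = (o + c + 1) / 2 + 1 / 2 ^ (b + 1) := by
      rw [pow_succ]; ring
    rwa [heq] at hres

/- ### claim E: structure of "successor type" fusible numbers -/

lemma myClaimE : ∀ b : ℕ, 1 ≤ b → ∀ x : ℝ, SuccT b x →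
    Fusible (x - 1 / 2 ^ b) ∧ MyP (x + 1 / 2 ^ b) := by
  intro b hb
  induction b, hb using Nat.le_induction with
  | base =>
    intro x hx
    -- x = 1/2
    obtain ⟨T, hTv, hTval⟩ := myExistsRep hx.1
    have hle : T.height ≤ 1 := hx.2.2 T hTv hTval
    have hge : 1 ≤ T.height := by
      have := myExpLeHeight (hTval ▸ hx.2.1)
      omega
    have hxval : x = 1/2 := by
      cases T with
      | leaf => simp [RepTree.height] at hge
      | node A B =>
        cases A with
        | node _ _ => simp [RepTree.height] at hle
        | leaf =>
          cases B with
          | node _ _ => simp [RepTree.height] at hle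
          | leaf => rw [← hTval]; norm_num [RepTree.val]
    subst hxval
    constructor
    · norm_num
      exact Fusible.zero
    · have : (1:ℝ)/2 + 1/2^1 = 1 := by norm_num
      rw [this]
      exact myPOne
  | succ b hb IH =>
    intro x hx
    obtain ⟨hxf, hxe, hxm⟩ := hx
    -- x ≠ 0
    have hxne : x ≠ 0 := by
      intro h0
      exact hxe.2 0 (by omega) ⟨0, by rw [h0]; norm_num⟩
    obtain ⟨T, hTv, hTval⟩ := myExistsRep hxf
    cases T with
    | leaf => exact absurd hTval.symm hxne
    | node U V =>
      obtain ⟨hUv, hVv, hUV⟩ := hTv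
      have hval : (U.val + V.val + 1) / 2 = x := hTval
      set u := U.val with hu
      set v := V.val with hv
      -- max height bounds for children
      have hmu : MaxHeightLe u b := by
        intro C hCv hCval
        have : (RepTree.node C V).height ≤ b + 1 :=
          hxm _ ⟨hCv, hVv, by rw [hCval]; exact hUV⟩ (by show (C.val + V.val + 1)/2 = x; rw [hCval]; exact hval)
        simp only [RepTree.height] at this
        omega
      have hmv : MaxHeightLe v b := by
        intro C hCv hCval
        have : (RepTree.node U C).height ≤ b + 1 :=
          hxm _ ⟨hUv, hCv, by rw [hCval]; exact hUV⟩
            (by show (U.val + C.val + 1)/2 = x; rw [hCval]; exact hval)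
        simp only [RepTree.height] at this
        omega
      -- exponents of children
      obtain ⟨eu, heu⟩ := myExistsExp ⟨U.height, myValDyadic U⟩
      obtain ⟨ev, hev⟩ := myExistsExp ⟨V.height, myValDyadic V⟩
      have heub : eu ≤ b := le_trans (myExpLeHeight heu) (hmu U hUv rfl)
      have hevb : ev ≤ b := le_trans (myExpLeHeight hev) (hmv V hVv rfl)
      -- eu ≠ ev
      have hne : eu ≠ ev := by
        intro heq
        -- first, a = b is forced
        obtain ⟨p, hp⟩ := heu.1
        obtain ⟨q, hq⟩ := hev.1
        rw [← heq] at hq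
        have hxeq : x = ((p + q + 2 ^ eu : ℤ) : ℝ) / 2 ^ (eu + 1) := by
          rw [← hval, hu, hv, hp, hq]
          push_cast
          rw [pow_succ]
          field_simp
        have haeb : b ≤ eu := by
          by_contra hab
          exact hxe.2 (eu + 1) (by omega) ⟨_, hxeq⟩
        have haeq : eu = b := by omega
        -- now both odd, numerator even, contradiction
        obtain ⟨p', hpo, hp'⟩ := myOddOfExp heu (by omega)
        obtain ⟨q', hqo, hq'⟩ := myOddOfExp hev (by omega)
        obtain ⟨s, hs⟩ := hpo
        obtain ⟨t, ht⟩ := hqo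
        obtain ⟨b', rfl⟩ : ∃ b', b = b' + 1 := ⟨b - 1, by omega⟩
        rw [haeq] at hp'
        rw [← heq, haeq] at hq'
        refine hxe.2 (b' + 1) (by omega) ⟨s + t + 1 + 2 ^ b', ?_⟩
        rw [← hval, hu, hv, hp', hq', hs, ht]
        push_cast
        field_simp
        ring
      -- the child with larger exponent has exponent b and is SuccT b
      rcases Nat.lt_or_ge eu ev with hlt | hge
      · -- v is the big child
        have hxev : IsExp x (ev + 1) := hval ▸ myExpFuseNe heu hev hlt
        have hevb' : ev = b := by
          have := myExpUnique hxev hxe; omega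
        subst hevb'
        have hSv : SuccT ev v := ⟨myFusibleVal V hVv, hev, hmv⟩
        obtain ⟨hc1, hc2⟩ := IH v hSv
        -- gap bound
        obtain ⟨p, hp⟩ := heu.1
        obtain ⟨p2, hp2⟩ := myScale (le_of_lt hlt) p hp
        obtain ⟨q, hq⟩ := hev.1
        have hgap : |v - u| ≤ 1 - 1 / 2 ^ ev := myGap hp2 hq hUV
        have hg1 : v - u ≤ 1 - 1 / 2 ^ ev := le_trans (le_abs_self _) hgap
        have hg2 : u - v ≤ 1 - 1 / 2 ^ ev := le_trans (le_abs_self _) (by rwa [abs_sub_comm] at hgap)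
        have := myStepCore (b := ev) (o := u) (c := v) (myFusibleVal U hUv) hg1 hg2 hc1 hc2
        rwa [hval] at this
      · have hlt : ev < eu := by omega
        have hxev : IsExp x (eu + 1) := by
          have := myExpFuseNe hev heu hlt
          have hcomm : (v + u + 1) / 2 = (u + v + 1) / 2 := by ring
          rw [hcomm] at this
          exact hval ▸ this
        have heub' : eu = b := by
          have := myExpUnique hxev hxe; omega
        subst heub'
        have hSu : SuccT eu u := ⟨myFusibleVal U hUv, heu, hmu⟩
        obtain ⟨hc1, hc2⟩ := IH u hSu
        obtain ⟨q, hq⟩ := hev.1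
        obtain ⟨q2, hq2⟩ := myScale (le_of_lt hlt) q hq
        obtain ⟨p, hp⟩ := heu.1
        have hgap : |u - v| ≤ 1 - 1 / 2 ^ eu := myGap hq2 hp (by rwa [abs_sub_comm] at hUV)
        have hg1 : u - v ≤ 1 - 1 / 2 ^ eu := le_trans (le_abs_self _) hgap
        have hg2 : v - u ≤ 1 - 1 / 2 ^ eu := le_trans (le_abs_self _) (by rwa [abs_sub_comm] at hgap)
        have := myStepCore (b := eu) (o := v) (c := u) (myFusibleVal V hVv) hg1 hg2 hc1 hc2
        have hcomm : (v + u + 1) / 2 = x := by rw [← hval]; ring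
        rwa [hcomm] at this
/- ### case A: a child has a representation higher than its exponent -/

lemma myCaseA {N : ℕ} {o c : ℝ} {ec : ℕ}
    (IH : ∀ k, k ≤ N → ∀ z : ℝ, ∀ m : ℕ, Fusible z → HMaxIs z k → IsExp z m → m < k → MyP z)
    (ho : Fusible o) (hco1 : c - o < 1) (hco2 : o - c < 1)
    (hMle : MaxHeightLe c N) (hec : IsExp c ec)
    (hbig : ∃ C : RepTree, C.Valid ∧ C.val = c ∧ ec < C.height) :
    MyP ((o + c + 1) / 2) := by
  classical
  set Q : ℕ → Prop := fun k => ∃ C : RepTree, C.Valid ∧ C.val = c ∧ C.height = k with hQ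
  obtain ⟨C0, hC0v, hC0val, hC0h⟩ := hbig
  have hC0N : C0.height ≤ N := hMle C0 hC0v hC0val
  have hQC0 : Q C0.height := ⟨C0, hC0v, hC0val, rfl⟩
  set K := Nat.findGreatest Q N with hK
  have hKspec : Q K := Nat.findGreatest_spec hC0N hQC0
  have hKle : C0.height ≤ K := Nat.le_findGreatest hC0N hQC0
  have hKN : K ≤ N := Nat.findGreatest_le N
  obtain ⟨C1, hC1v, hC1val, hC1h⟩ := hKspec
  have hmaxc : HMaxIs c K := by
    refine ⟨⟨C1, hC1v, hC1val, hC1h⟩, fun T hTv hTval => ?_⟩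
    by_contra hgt
    push_neg at hgt
    exact Nat.findGreatest_is_greatest hgt (hMle T hTv hTval) ⟨T, hTv, hTval, rfl⟩
  have hecK : ec < K := lt_of_lt_of_le hC0h hKle
  have hPc : MyP c := IH K hKN c ec (hC1val ▸ myFusibleVal C1 hC1v) hmaxc hec hecK
  exact myPFuse ho hPc (le_of_lt hco1) hco2

/- ### case B: both children are successor-type with the same exponent -/

lemma myCaseB {b : ℕ} {l r : ℝ} (hb : 1 ≤ b) (hlr : l ≤ r) (hrl : r - l < 1)
    (hSl : SuccT b l) (hSr : SuccT b r) : MyP ((l + r + 1) / 2) := by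
  obtain ⟨hFl, hPl⟩ := myClaimE b hb l hSl
  obtain ⟨hFr, hPr⟩ := myClaimE b hb r hSr
  have hdpos : (0:ℝ) < 1 / 2 ^ b := by positivity
  have h2d : (2:ℝ) * (1 / 2 ^ b) ≤ 1 := by
    rw [mul_one_div, div_le_one (by positivity)]
    calc (2:ℝ) = 2 ^ 1 := (pow_one 2).symm
    _ ≤ 2 ^ b := pow_le_pow_right₀ one_le_two hb
  have hres := myPFuse (o := r - 1 / 2 ^ b) (c := l + 1 / 2 ^ b) hFr hPl
    (by linarith) (by linarith)
  have heq : ((r - 1 / 2 ^ b : ℝ) + (l + 1 / 2 ^ b) + 1) / 2 = (l + r + 1) / 2 := by ring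
  rwa [heq] at hres

/- ### the main induction -/

lemma myMain : ∀ n : ℕ, ∀ z : ℝ, ∀ m : ℕ, Fusible z → HMaxIs z n → IsExp z m → m < n → MyP z := by
  intro n
  induction n using Nat.strong_induction_on with
  | _ n IHn =>
    intro z m hz hmax he hmn
    obtain ⟨T, hTv, hTval, hTh⟩ := hmax.1
    cases T with
    | leaf => exact absurd hTh (by simp [RepTree.height]; omega)
    | node L R =>
      obtain ⟨hLv, hRv, hLR⟩ := hTv
      have hval : (L.val + R.val + 1) / 2 = z := hTval
      simp only [RepTree.height] at hTh
      obtain ⟨N, rfl⟩ : ∃ N, n = N + 1 := ⟨n - 1, by omega⟩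
      have hN : max L.height R.height = N := by omega
      have IH : ∀ k, k ≤ N → ∀ z : ℝ, ∀ m : ℕ, Fusible z → HMaxIs z k → IsExp z m → m < k → MyP z :=
        fun k hk => IHn k (by omega)
      have hfl : Fusible L.val := myFusibleVal L hLv
      have hfr : Fusible R.val := myFusibleVal R hRv
      have hlr1 : R.val - L.val < 1 := lt_of_le_of_lt (le_abs_self _) hLR
      have hlr2 : L.val - R.val < 1 :=
        lt_of_le_of_lt (le_abs_self _) (by rwa [abs_sub_comm] at hLR)
      have hml : MaxHeightLe L.val N := by
        intro C hCv hCval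
        have := hmax.2 (.node C R) ⟨hCv, hRv, by rw [hCval]; exact hLR⟩
          (by show (C.val + R.val + 1)/2 = z; rw [hCval]; exact hval)
        simp only [RepTree.height] at this
        omega
      have hmr : MaxHeightLe R.val N := by
        intro C hCv hCval
        have := hmax.2 (.node L C) ⟨hLv, hCv, by rw [hCval]; exact hLR⟩
          (by show (L.val + C.val + 1)/2 = z; rw [hCval]; exact hval)
        simp only [RepTree.height] at this
        omega
      obtain ⟨el, hel⟩ := myExistsExp ⟨L.height, myValDyadic L⟩
      obtain ⟨er, her⟩ := myExistsExp ⟨R.height, myValDyadic R⟩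
      by_cases hbr : ∃ C : RepTree, C.Valid ∧ C.val = R.val ∧ er < C.height
      · have := myCaseA IH hfl hlr1 hlr2 hmr her hbr
        rwa [hval] at this
      · by_cases hbl : ∃ C : RepTree, C.Valid ∧ C.val = L.val ∧ el < C.height
        · have := myCaseA IH hfr hlr2 hlr1 hml hel hbl
          have hcomm : (R.val + L.val + 1) / 2 = z := by rw [← hval]; ring
          rwa [hcomm] at this
        · push_neg at hbr hbl
          have hhl : L.height ≤ el := hbl L hLv rfl
          have hhr : R.height ≤ er := hbr R hRv rfl
          have helh : el = L.height := le_antisymm (myExpLeHeight hel) hhl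
          have herh : er = R.height := le_antisymm (myExpLeHeight her) hhr
          have hmax2 : max el er = N := by rw [helh, herh]; exact hN
          have helN : el ≤ N := le_trans (le_max_left el er) (le_of_eq hmax2)
          have herN : er ≤ N := le_trans (le_max_right el er) (le_of_eq hmax2)
          by_cases heq : el = er
          · -- case B setup
            have helN' : el = N := by
              rcases max_choice el er with hch | hch <;> omega
            rcases Nat.eq_zero_or_pos el with hz0 | hpos
            · -- b = 0 : impossible
              exfalso
              obtain ⟨p, hp⟩ := hel.1
              obtain ⟨q, hq⟩ := her.1
              rw [hz0] at hp
              rw [← heq, hz0] at hq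
              simp only [pow_zero, div_one] at hp hq
              have hpq : p = q := by
                have h1 : |(q:ℝ) - (p:ℝ)| < 1 := by rw [← hp, ← hq]; exact hLR
                have h2 : |q - p| < 1 := by exact_mod_cast h1
                have h3 := abs_lt.mp h2
                omega
              have hz1 : IsExp z 1 := by
                refine myExpOfOdd (p := 2 * p + 1) ⟨p, by ring⟩ le_rfl ?_
                rw [← hval, hp, hq, ← hpq]
                push_cast
                ring
              have := myExpUnique he hz1
              omega
            · -- b ≥ 1
              have hSl : SuccT el L.val := ⟨hfl, hel, fun C hCv hCval => hbl C hCv hCval⟩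
              have hSr : SuccT el R.val := ⟨hfr, heq ▸ her, fun C hCv hCval => heq ▸ hbr C hCv hCval⟩
              rcases le_total L.val R.val with hle | hle
              · have := myCaseB hpos hle hlr1 hSl hSr
                rwa [hval] at this
              · have := myCaseB hpos hle hlr2 hSr hSl
                have hcomm : (R.val + L.val + 1) / 2 = z := by rw [← hval]; ring
                rwa [hcomm] at this
          · -- exponents differ : contradiction with IsExp z m, m < N + 1
            exfalso
            rcases Nat.lt_or_ge el er with hlt | hge
            · have hx : IsExp z (er + 1) := hval ▸ myExpFuseNe hel her hlt
              have herN' : er = N := by rcases max_choice el er with hch | hch <;> omega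
              have := myExpUnique he hx
              omega
            · have hlt : er < el := by omega
              have hx : IsExp z (el + 1) := by
                have h0 := myExpFuseNe her hel hlt
                have hcomm : (R.val + L.val + 1) / 2 = (L.val + R.val + 1) / 2 := by ring
                rw [hcomm] at h0
                exact hval ▸ h0
              have helN' : el = N := by rcases max_choice el er with hch | hch <;> omega
              have := myExpUnique he hx
              omega

/- ### from P to being a limit -/

lemma myLimitOfP {z : ℝ} (hP : MyP z) : IsLimitFusible z := by
  obtain ⟨J, hJ⟩ := hP
  constructor
  · rintro w ⟨-, hw⟩
    exact le_of_lt hw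
  · rintro b hb
    by_contra hzb
    push_neg at hzb
    obtain ⟨N, hN⟩ := exists_pow_lt_of_lt_one (sub_pos.mpr hzb) (by norm_num : (1:ℝ)/2 < 1)
    set j := max N J with hj
    have hpow : (1:ℝ) / 2 ^ j ≤ (1/2 : ℝ) ^ N := by
      calc (1:ℝ) / 2 ^ j = (1/2:ℝ) ^ j := by rw [div_pow, one_pow]
      _ ≤ (1/2:ℝ) ^ N := pow_le_pow_of_le_one (by norm_num) (by norm_num) (le_max_left N J)
    have hjpos : (0:ℝ) < 1 / 2 ^ j := by positivity
    have hfus : Fusible (z - 1 / 2 ^ j) := hJ j (le_max_right N J)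
    have hmem : z - 1 / 2 ^ j ∈ {w : ℝ | Fusible w ∧ w < z} := ⟨hfus, by linarith⟩
    have hle := hb hmem
    linarith

theorem limit_of_hmax_gt_exp (z : ℝ) (n m : ℕ) (hz : Fusible z)
    (hmax : HMaxIs z n) (he : IsExp z m) (h : m < n) :
    IsLimitFusible z :=
  myLimitOfP (myMain n z m hz hmax he h)
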